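/- Fix an integer m ≥ 1, set x(t) = cos(2t), y(t) = cos((2m+1)t + 1/2), and Z(t) = cos((6m+7)t + π/4). Let k be an integer with 1 ≤ k ≤ 2m and let t₁ = (2(2m+1) − 2k)π/(2(2m+1)), t₂ = (2(2m+1) + 2k)π/(2(2m+1)) be the Type II double-point times with j = 2. Then sign[(x′(t₁) y′(t₂) − x′(t₂) y′(t₁)) · (Z(t₁) − Z(t₂))] = −sign[cos(2kπ/(2m+1))] = −sign[x(t₁)]; in particular this quantity is nonzero, and it is negative exactly when the double point has positive x-coordinate. -/

import Mathlib

open Real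

private lemma sin_int_pi_add (n : ℤ) (x : ℝ) :
    Real.sin ((n : ℝ) * π + x) = Real.cos ((n : ℝ) * π) * Real.sin x := by
  rw [Real.sin_add, Real.sin_int_mul_pi]; ring

private lemma cos_int_pi_add (n : ℤ) (x : ℝ) :
    Real.cos ((n : ℝ) * π + x) = Real.cos ((n : ℝ) * π) * Real.cos x := by
  rw [Real.cos_add, Real.sin_int_mul_pi]; ring

private lemma deriv_cos_lin (c d t : ℝ) :
    deriv (fun s => Real.cos (c * s + d)) t = -Real.sin (c * t + d) * c := by
  have h1 : HasDerivAt (fun s : ℝ => c * s + d) c t := by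
    simpa using ((hasDerivAt_id t).const_mul c).add_const d
  exact ((Real.hasDerivAt_cos (c * t + d)).comp t h1).deriv

set_option maxHeartbeats 1000000 in
/-- The sign of the crossing `C^{II}_{k,2}` of the Lissajous curve with
`x(t) = cos 2t`, `y(t) = cos((2m+1)t + 1/2)`, and height function
`Z(t) = cos((6m+7)t + π/4)` equals `−sign(cos(2kπ/(2m+1))) = −sign(x(t₁))`; in
particular it is nonzero, and it is negative exactly when the double point lies in
the right half-plane. -/
theorem typeII_j2_crossing_sign
    (m k : ℤ) (hm : 1 ≤ m) (hk1 : 1 ≤ k) (hk2 : k ≤ 2 * m)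
    (x y Z : ℝ → ℝ)
    (hx : ∀ t, x t = Real.cos (2 * t))
    (hy : ∀ t, y t = Real.cos ((2 * (m : ℝ) + 1) * t + 1 / 2))
    (hZ : ∀ t, Z t = Real.cos ((6 * (m : ℝ) + 7) * t + π / 4))
    (t₁ t₂ : ℝ)
    (ht₁ : t₁ = (2 * (2 * (m : ℝ) + 1) - 2 * (k : ℝ)) * π / (2 * (2 * (m : ℝ) + 1)))
    (ht₂ : t₂ = (2 * (2 * (m : ℝ) + 1) + 2 * (k : ℝ)) * π / (2 * (2 * (m : ℝ) + 1))) :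
    Real.sign ((deriv x t₁ * deriv y t₂ - deriv x t₂ * deriv y t₁) * (Z t₁ - Z t₂)) =
        -Real.sign (Real.cos (2 * (k : ℝ) * π / (2 * (m : ℝ) + 1))) ∧
    Real.sign ((deriv x t₁ * deriv y t₂ - deriv x t₂ * deriv y t₁) * (Z t₁ - Z t₂)) =
        -Real.sign (x t₁) ∧
    Real.sign ((deriv x t₁ * deriv y t₂ - deriv x t₂ * deriv y t₁) * (Z t₁ - Z t₂)) ≠ 0 ∧
    ((deriv x t₁ * deriv y t₂ - deriv x t₂ * deriv y t₁) * (Z t₁ - Z t₂) < 0 ↔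
      0 < x t₁) := by
  obtain rfl : x = fun t => Real.cos (2 * t + 0) := funext fun t => by rw [hx t, add_zero]
  obtain rfl : y = fun t => Real.cos ((2 * (m : ℝ) + 1) * t + 1 / 2) := funext hy
  obtain rfl : Z = fun t => Real.cos ((6 * (m : ℝ) + 7) * t + π / 4) := funext hZ
  have hmR : (1 : ℝ) ≤ (m : ℝ) := by exact_mod_cast hm
  have hden : (2 * (m : ℝ) + 1) ≠ 0 := by nlinarith
  set φ : ℝ := (k : ℝ) * π / (2 * (m : ℝ) + 1) with hφ
  have hkey : φ * (2 * (m : ℝ) + 1) = (k : ℝ) * π := by rw [hφ]; field_simp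
  have e1 : t₁ = π - φ := by rw [ht₁, hφ]; field_simp
  have e2 : t₂ = π + φ := by rw [ht₂, hφ]; field_simp
  rw [e1, e2]
  -- derivatives of x
  have hdx1 : deriv (fun t => Real.cos (2 * t + 0)) (π - φ) = 2 * Real.sin (2 * φ) := by
    rw [deriv_cos_lin, show 2 * (π - φ) + 0 = 2 * π - 2 * φ by ring,
      Real.sin_sub, Real.sin_two_pi, Real.cos_two_pi]; ring
  have hdx2 : deriv (fun t => Real.cos (2 * t + 0)) (π + φ) = -(2 * Real.sin (2 * φ)) := by
    rw [deriv_cos_lin, show 2 * (π + φ) + 0 = 2 * π + 2 * φ by ring,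
      Real.sin_add, Real.sin_two_pi, Real.cos_two_pi]; ring
  -- derivatives of y
  set ε₁ : ℝ := Real.cos (((2 * m + 1 - k : ℤ) : ℝ) * π) with hε₁
  have hay1 : (2 * (m : ℝ) + 1) * (π - φ) + 1 / 2 = ((2 * m + 1 - k : ℤ) : ℝ) * π + 1 / 2 := by
    push_cast; linear_combination -hkey
  have hay2 : (2 * (m : ℝ) + 1) * (π + φ) + 1 / 2 = ((2 * m + 1 + k : ℤ) : ℝ) * π + 1 / 2 := by
    push_cast; linear_combination hkey
  have hepsy : Real.cos (((2 * m + 1 + k : ℤ) : ℝ) * π) = ε₁ := by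
    rw [hε₁, show ((2 * m + 1 + k : ℤ) : ℝ) * π
        = ((2 * m + 1 - k : ℤ) : ℝ) * π + (k : ℝ) * (2 * π) by push_cast; ring]
    exact_mod_cast Real.cos_add_int_mul_two_pi _ k
  have hdy1 : deriv (fun t => Real.cos ((2 * (m : ℝ) + 1) * t + 1 / 2)) (π - φ) =
      -(ε₁ * Real.sin (1 / 2)) * (2 * (m : ℝ) + 1) := by
    rw [deriv_cos_lin, hay1, sin_int_pi_add, hε₁]
  have hdy2 : deriv (fun t => Real.cos ((2 * (m : ℝ) + 1) * t + 1 / 2)) (π + φ) =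
      -(ε₁ * Real.sin (1 / 2)) * (2 * (m : ℝ) + 1) := by
    rw [deriv_cos_lin, hay2, sin_int_pi_add, hepsy]
  -- Z values
  set ε₂ : ℝ := Real.cos (((6 * m + 7 - 3 * k : ℤ) : ℝ) * π) with hε₂
  have haz1 : (6 * (m : ℝ) + 7) * (π - φ) + π / 4
      = ((6 * m + 7 - 3 * k : ℤ) : ℝ) * π + (π / 4 - 4 * φ) := by
    push_cast; linear_combination -3 * hkey
  have haz2 : (6 * (m : ℝ) + 7) * (π + φ) + π / 4
      = ((6 * m + 7 + 3 * k : ℤ) : ℝ) * π + (π / 4 + 4 * φ) := by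
    push_cast; linear_combination 3 * hkey
  have hepsz : Real.cos (((6 * m + 7 + 3 * k : ℤ) : ℝ) * π) = ε₂ := by
    rw [hε₂, show ((6 * m + 7 + 3 * k : ℤ) : ℝ) * π
        = ((6 * m + 7 - 3 * k : ℤ) : ℝ) * π + ((3 * k : ℤ) : ℝ) * (2 * π) by push_cast; ring]
    exact_mod_cast Real.cos_add_int_mul_two_pi _ (3 * k)
  have hZ1 : Real.cos ((6 * (m : ℝ) + 7) * (π - φ) + π / 4) = ε₂ * Real.cos (π / 4 - 4 * φ) := by
    rw [haz1, cos_int_pi_add, hε₂]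
  have hZ2 : Real.cos ((6 * (m : ℝ) + 7) * (π + φ) + π / 4) = ε₂ * Real.cos (π / 4 + 4 * φ) := by
    rw [haz2, cos_int_pi_add, hepsz]
  -- product of parity signs
  have heps : ε₁ * ε₂ = 1 := by
    have hA := Real.cos_add (((2 * m + 1 - k : ℤ) : ℝ) * π) (((6 * m + 7 - 3 * k : ℤ) : ℝ) * π)
    have hB := Real.cos_sub (((2 * m + 1 - k : ℤ) : ℝ) * π) (((6 * m + 7 - 3 * k : ℤ) : ℝ) * π)
    have hAv : Real.cos (((2 * m + 1 - k : ℤ) : ℝ) * π + ((6 * m + 7 - 3 * k : ℤ) : ℝ) * π)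
        = 1 := by
      rw [show ((2 * m + 1 - k : ℤ) : ℝ) * π + ((6 * m + 7 - 3 * k : ℤ) : ℝ) * π
          = ((4 * m + 4 - 2 * k : ℤ) : ℝ) * (2 * π) by push_cast; ring]
      exact Real.cos_int_mul_two_pi _
    have hBv : Real.cos (((2 * m + 1 - k : ℤ) : ℝ) * π - ((6 * m + 7 - 3 * k : ℤ) : ℝ) * π)
        = 1 := by
      rw [show ((2 * m + 1 - k : ℤ) : ℝ) * π - ((6 * m + 7 - 3 * k : ℤ) : ℝ) * π
          = ((-2 * m - 3 + k : ℤ) : ℝ) * (2 * π) by push_cast; ring]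
      exact Real.cos_int_mul_two_pi _
    rw [hAv] at hA; rw [hBv] at hB
    rw [hε₁, hε₂]; linarith
  -- the product
  have hP : (deriv (fun t => Real.cos (2 * t + 0)) (π - φ) *
        deriv (fun t => Real.cos ((2 * (m : ℝ) + 1) * t + 1 / 2)) (π + φ) -
        deriv (fun t => Real.cos (2 * t + 0)) (π + φ) *
        deriv (fun t => Real.cos ((2 * (m : ℝ) + 1) * t + 1 / 2)) (π - φ)) *
      ((fun t => Real.cos ((6 * (m : ℝ) + 7) * t + π / 4)) (π - φ) -
        (fun t => Real.cos ((6 * (m : ℝ) + 7) * t + π / 4)) (π + φ))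
      = -(8 * Real.sqrt 2 * (2 * (m : ℝ) + 1) * Real.sin (1 / 2) * Real.sin (2 * φ) ^ 2)
        * Real.cos (2 * φ) := by
    simp only [hdx1, hdx2, hdy1, hdy2]
    simp only [hZ1, hZ2]
    have hsplit : Real.cos (π / 4 - 4 * φ) - Real.cos (π / 4 + 4 * φ)
        = Real.sqrt 2 * Real.sin (4 * φ) := by
      rw [Real.cos_sub, Real.cos_add, Real.sin_pi_div_four]; ring
    have h4 : Real.sin (4 * φ) = 2 * Real.sin (2 * φ) * Real.cos (2 * φ) := by
      rw [show (4 : ℝ) * φ = 2 * (2 * φ) by ring, Real.sin_two_mul]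
    have hZd : ε₂ * Real.cos (π / 4 - 4 * φ) - ε₂ * Real.cos (π / 4 + 4 * φ)
        = ε₂ * (Real.sqrt 2 * (2 * Real.sin (2 * φ) * Real.cos (2 * φ))) := by
      rw [← h4, ← hsplit]; ring
    rw [hZd]
    linear_combination (-8 * Real.sqrt 2 * (2 * (m : ℝ) + 1) * Real.sin (1 / 2) *
      Real.sin (2 * φ) ^ 2 * Real.cos (2 * φ)) * heps
  rw [hP]
  -- nonvanishing of sin(2φ) and cos(2φ)
  have hπ := Real.pi_pos
  have hs2 : Real.sin (2 * φ) ≠ 0 := by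
    intro h
    obtain ⟨n, hn⟩ := Real.sin_eq_zero_iff.mp h
    have h6 : ((n * (2 * m + 1) : ℤ) : ℝ) * π = ((2 * k : ℤ) : ℝ) * π := by
      push_cast; linear_combination (2 * (m : ℝ) + 1) * hn + 2 * hkey
    have hz : (n * (2 * m + 1) : ℤ) = 2 * k := by
      exact_mod_cast mul_right_cancel₀ Real.pi_ne_zero h6
    have hn1 : 1 ≤ n := by
      by_contra hcon
      push_neg at hcon
      have : (0 : ℤ) ≤ -n * (2 * m + 1) :=
        mul_nonneg (by omega) (by omega)
      nlinarith
    have hn2 : n ≤ 1 := by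
      by_contra hcon
      push_neg at hcon
      have : (0 : ℤ) ≤ (n - 2) * (2 * m + 1) :=
        mul_nonneg (by omega) (by omega)
      nlinarith
    have : n = 1 := le_antisymm hn2 hn1
    subst this; omega
  have hc2 : Real.cos (2 * φ) ≠ 0 := by
    intro h
    obtain ⟨n, hn⟩ := Real.cos_eq_zero_iff.mp h
    have h6 : (((2 * n + 1) * (2 * m + 1) : ℤ) : ℝ) * π = ((4 * k : ℤ) : ℝ) * π := by
      push_cast; linear_combination (-2) * (2 * (m : ℝ) + 1) * hn + 4 * hkey
    have hz : ((2 * n + 1) * (2 * m + 1) : ℤ) = 4 * k := by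
      exact_mod_cast mul_right_cancel₀ Real.pi_ne_zero h6
    obtain ⟨p, hp⟩ : ∃ p : ℤ, 4 * k = 4 * p + 2 * n + 2 * m + 1 :=
      ⟨n * m, by linear_combination -hz⟩
    omega
  -- positivity of the constant
  have hsinhalf : 0 < Real.sin (1 / 2) := by
    apply Real.sin_pos_of_pos_of_lt_pi (by norm_num)
    nlinarith [Real.pi_gt_three]
  have hsq : 0 < Real.sin (2 * φ) ^ 2 := by
    have := pow_pos (abs_pos.mpr hs2) 2
    rwa [sq_abs] at this
  have hD : 0 < 8 * Real.sqrt 2 * (2 * (m : ℝ) + 1) * Real.sin (1 / 2) *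
      Real.sin (2 * φ) ^ 2 := by
    have h2 : (0 : ℝ) < Real.sqrt 2 := Real.sqrt_pos.mpr (by norm_num)
    have hNpos : (0 : ℝ) < 2 * (m : ℝ) + 1 := by linarith
    positivity
  set D : ℝ := 8 * Real.sqrt 2 * (2 * (m : ℝ) + 1) * Real.sin (1 / 2) *
    Real.sin (2 * φ) ^ 2 with hDdef
  -- x t₁ = cos 2φ and the goal cosine is cos 2φ
  have hxt : (fun t => Real.cos (2 * t + 0)) (π - φ) = Real.cos (2 * φ) := by
    show Real.cos (2 * (π - φ) + 0) = _
    rw [show 2 * (π - φ) + 0 = 2 * π - 2 * φ by ring, Real.cos_sub, Real.cos_two_pi,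
      Real.sin_two_pi]; ring
  have hgc : 2 * (k : ℝ) * π / (2 * (m : ℝ) + 1) = 2 * φ := by rw [hφ]; ring
  rw [hxt, hgc]
  rcases hc2.lt_or_gt with hc | hc
  · have hPpos : 0 < -D * Real.cos (2 * φ) := by
      have h1 : -D * Real.cos (2 * φ) = D * (-Real.cos (2 * φ)) := by ring
      rw [h1]
      exact mul_pos hD (neg_pos.mpr hc)
    rw [Real.sign_of_pos hPpos, Real.sign_of_neg hc]
    refine ⟨by norm_num, by norm_num, by norm_num, ?_⟩
    constructor
    · intro h; linarith
    · intro h; linarith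
  · have hPneg : -D * Real.cos (2 * φ) < 0 := by
      have h1 : -D * Real.cos (2 * φ) = -(D * Real.cos (2 * φ)) := by ring
      rw [h1]
      exact neg_neg_iff_pos.mpr (mul_pos hD hc)
    rw [Real.sign_of_neg hPneg, Real.sign_of_pos hc]
    exact ⟨by norm_num, by norm_num, by norm_num, ⟨fun _ => hc, fun _ => hPneg⟩⟩
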